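/- Let C be a nonempty compact convex polyhedral set in ℝⁿ and x ∈ ℝⁿ. Let S = Argmin_{c∈C} ⟨c, x⟩ and let z₀ be the minimal-norm element of S (i.e., z₀ = proj_S(0)). Then there exists λ* ≥ 0 such that z₀ is the unique minimizer over {z : Az ≤ b} of z ↦ ½‖z‖² + λ*(⟨x, z⟩ - ν), where ν = min_{c∈C} ⟨c, x⟩, and consequently z₀ = proj_C(-λ* x). -/

import Mathlib

open RealInnerProductSpace

variable {E : Type*} [NormedAddCommGroup E] [InnerProductSpace ℝ E] [FiniteDimensional ℝ E]
variable {ι : Type*}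

def coneIn (v : ι → E) (s : Finset ι) : Set E :=
  {y | ∃ c : ι → ℝ, (∀ i, 0 ≤ c i) ∧ y = ∑ i ∈ s, c i • v i}

theorem coneIn_mono (v : ι → E) {s t : Finset ι} (hts : t ⊆ s) :
    coneIn v t ⊆ coneIn v s := by
  classical
  rintro y ⟨c, hc, rfl⟩
  refine ⟨fun i => if i ∈ t then c i else 0,
    fun i => by by_cases h : i ∈ t <;> simp [h, hc i], ?_⟩
  refine (Finset.sum_congr rfl fun i hi => by simp [hi]).trans
    (Finset.sum_subset hts fun i _ hit => by simp [hit])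

theorem coneIn_cara (v : ι → E) (s : Finset ι) :
    ∀ y ∈ coneIn v s, ∃ t, t ⊆ s ∧
      LinearIndependent ℝ (fun i : t => v i) ∧ y ∈ coneIn v t := by
  classical
  induction s using Finset.strongInductionOn with
  | _ s ih =>
    intro y hy
    by_cases hli : LinearIndependent ℝ (fun i : s => v i)
    · exact ⟨s, le_refl _, hli, hy⟩
    obtain ⟨c, hc, rfl⟩ := hy
    rw [Fintype.not_linearIndependent_iff] at hli
    obtain ⟨g, hg0, i₁, hi₁⟩ := hli
    -- extend g to ι, with a positive entry
    have ext0 : ∀ g' : {x // x ∈ s} → ℝ, (∑ i : {x // x ∈ s}, g' i • v ↑i = 0) →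
        ∑ i ∈ s, (if h : i ∈ s then g' ⟨i, h⟩ else 0) • v i = 0 := by
      intro g' hg'
      rw [← Finset.sum_coe_sort s (fun i => (if h : i ∈ s then g' ⟨i, h⟩ else 0) • v i)]
      simpa using hg'
    obtain ⟨G, hGsum, iG, hiG, hiGpos⟩ :
        ∃ G : ι → ℝ, (∑ i ∈ s, G i • v i = 0) ∧ ∃ i ∈ s, 0 < G i := by
      by_cases hsign : 0 < g i₁
      · exact ⟨fun i => if h : i ∈ s then g ⟨i, h⟩ else 0, ext0 g hg0,
          ⟨i₁, i₁.2, by simp [i₁.2, hsign]⟩⟩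
      · have hneg : 0 < -g i₁ := by
          rcases lt_or_gt_of_ne hi₁ with h | h
          · linarith
          · exact absurd h hsign
        refine ⟨fun i => if h : i ∈ s then -g ⟨i, h⟩ else 0, ext0 (fun i => -g i) ?_,
          ⟨i₁, i₁.2, by simp [i₁.2, hneg]⟩⟩
        simp only [neg_smul]
        rw [Finset.sum_neg_distrib, hg0, neg_zero]
    set T : Finset ι := s.filter (fun i => 0 < G i) with hT
    have hTne : T.Nonempty := ⟨iG, by simp [hT, hiG, hiGpos]⟩
    set τ : ℝ := T.inf' hTne (fun i => c i / G i) with hτ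
    have hτ0 : 0 ≤ τ := by
      apply Finset.le_inf'
      intro i hi
      have : 0 < G i := (Finset.mem_filter.mp hi).2
      exact div_nonneg (hc i) this.le
    obtain ⟨i₀, hi₀T, hτeq⟩ := T.exists_mem_eq_inf' hTne (fun i => c i / G i)
    have hi₀s : i₀ ∈ s := (Finset.mem_filter.mp hi₀T).1
    have hGi₀ : 0 < G i₀ := (Finset.mem_filter.mp hi₀T).2
    set c' : ι → ℝ := fun i => if i ∈ s then c i - τ * G i else 0 with hc'def
    have hc' : ∀ i, 0 ≤ c' i := by
      intro i
      by_cases his : i ∈ s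
      · simp only [hc'def, if_pos his, sub_nonneg]
        by_cases hGi : 0 < G i
        · have hiT : i ∈ T := Finset.mem_filter.mpr ⟨his, hGi⟩
          have := Finset.inf'_le (fun i => c i / G i) hiT
          rw [← hτ] at this
          calc τ * G i ≤ (c i / G i) * G i := by
                exact mul_le_mul_of_nonneg_right this hGi.le
            _ = c i := div_mul_cancel₀ _ hGi.ne'
        · push_neg at hGi
          have : τ * G i ≤ 0 := mul_nonpos_of_nonneg_of_nonpos hτ0 hGi
          linarith [hc i]
      · simp [hc'def, his]
    have hsum' : ∑ i ∈ s, c i • v i = ∑ i ∈ s, c' i • v i := by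
      rw [← sub_eq_zero]
      rw [← Finset.sum_sub_distrib]
      have : ∀ i ∈ s, c i • v i - c' i • v i = (τ * G i) • v i := by
        intro i hi
        simp [hc'def, if_pos hi, sub_smul]
      rw [Finset.sum_congr rfl this]
      simp only [mul_smul]
      rw [← Finset.smul_sum, hGsum, smul_zero]
    have hci₀ : c' i₀ = 0 := by
      simp only [hc'def, if_pos hi₀s, sub_eq_zero]
      rw [hτ, hτeq, div_mul_cancel₀ _ hGi₀.ne']
    have hmem : (∑ i ∈ s, c i • v i) ∈ coneIn v (s.erase i₀) := by
      refine ⟨c', hc', ?_⟩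
      rw [hsum']
      rw [Finset.sum_erase _ (by rw [hci₀, zero_smul])]
    obtain ⟨t, hts, hli', hmem'⟩ := ih (s.erase i₀) (Finset.erase_ssubset hi₀s) _ hmem
    exact ⟨t, hts.trans (Finset.erase_subset _ _), hli', hmem'⟩

theorem coneIn_isClosed_of_li (v : ι → E) (s : Finset ι)
    (hli : LinearIndependent ℝ (fun i : s => v i)) : IsClosed (coneIn v s) := by
  classical
  set f : ({x // x ∈ s} → ℝ) →ₗ[ℝ] E :=
    { toFun := fun c => ∑ i : {x // x ∈ s}, c i • v ↑i
      map_add' := fun c d => by simp [add_smul, Finset.sum_add_distrib]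
      map_smul' := fun t c => by simp [smul_smul, Finset.smul_sum] } with hf
  have hker : LinearMap.ker f = ⊥ := by
    rw [LinearMap.ker_eq_bot']
    intro g hg
    have hg0 := Fintype.linearIndependent_iff.mp hli g (by simpa [hf] using hg)
    funext i
    exact hg0 i
  obtain ⟨K, hK0, hKa⟩ := f.exists_antilipschitzWith hker
  have hemb :=
    hKa.isClosedEmbedding f.toContinuousLinearMap.uniformContinuous
  have himg : coneIn v s = f '' {c | ∀ i, 0 ≤ c i} := by
    ext y
    constructor
    · rintro ⟨c, hc, rfl⟩
      refine ⟨fun i => c ↑i, fun i => hc ↑i, ?_⟩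
      show ∑ i : {x // x ∈ s}, c ↑i • v ↑i = ∑ i ∈ s, c i • v i
      exact Finset.sum_coe_sort s (fun i => c i • v i)
    · rintro ⟨c, hc, rfl⟩
      refine ⟨fun i => if h : i ∈ s then c ⟨i, h⟩ else 0,
        fun i => by by_cases h : i ∈ s <;> simp [h, hc ⟨i, _⟩], ?_⟩
      show f c = _
      rw [← Finset.sum_coe_sort s (fun i => (if h : i ∈ s then c ⟨i, h⟩ else 0) • v i)]
      all_goals simp [hf]
  rw [himg]
  apply hemb.isClosedMap
  have : {c : {x // x ∈ s} → ℝ | ∀ i, 0 ≤ c i} = ⋂ i, {c | 0 ≤ c i} := by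
    ext c; simp [Set.mem_iInter]
  rw [this]
  exact isClosed_iInter fun i => isClosed_le continuous_const (continuous_apply i)

theorem coneIn_isClosed (v : ι → E) (s : Finset ι) : IsClosed (coneIn v s) := by
  classical
  have hrep : coneIn v s =
      ⋃ t ∈ {t : Finset ι | t ⊆ s ∧ LinearIndependent ℝ (fun i : t => v i)}, coneIn v t := by
    apply Set.Subset.antisymm
    · intro y hy
      obtain ⟨t, hts, hli, hyt⟩ := coneIn_cara v s y hy
      exact Set.mem_biUnion ⟨hts, hli⟩ hyt
    · intro y hy
      simp only [Set.mem_iUnion] at hy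
      obtain ⟨t, ⟨hts, -⟩, hyt⟩ := hy
      exact coneIn_mono v hts hyt
  rw [hrep]
  apply Set.Finite.isClosed_biUnion
  · exact (s.powerset : Finset (Finset ι)).finite_toSet.subset
      (fun t ht => Finset.mem_coe.mpr (Finset.mem_powerset.mpr ht.1))
  · intro t ht
    exact coneIn_isClosed_of_li v t ht.2

theorem farkas_cone {ι : Type*} [Fintype ι] (v : ι → E) (y : E)
    (h : ∀ d : E, (∀ i, 0 ≤ ⟪v i, d⟫) → 0 ≤ ⟪y, d⟫) :
    ∃ c : ι → ℝ, (∀ i, 0 ≤ c i) ∧ y = ∑ i, c i • v i := by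
  classical
  set K : ConvexCone ℝ E :=
    { carrier := coneIn v Finset.univ
      smul_mem' := by
        rintro t ht z ⟨c, hc, rfl⟩
        exact ⟨fun i => t * c i, fun i => mul_nonneg ht.le (hc i),
          by rw [Finset.smul_sum]; simp [smul_smul]⟩
      add_mem' := by
        rintro z ⟨c, hc, rfl⟩ z' ⟨c', hc', rfl⟩
        exact ⟨fun i => c i + c' i, fun i => add_nonneg (hc i) (hc' i),
          by rw [← Finset.sum_add_distrib]; simp [add_smul]⟩ } with hK
  have hne : (K : Set E).Nonempty := ⟨0, ⟨fun _ => 0, fun _ => le_refl 0, by simp⟩⟩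
  have hcl : IsClosed (K : Set E) := coneIn_isClosed v Finset.univ
  have hvK : ∀ i, v i ∈ (K : Set E) := by
    intro i
    refine ⟨fun j => if j = i then 1 else 0,
      fun j => by by_cases h : j = i <;> simp [h], ?_⟩
    simp [ite_smul]
  by_contra hcon
  have hyK : y ∉ (K : Set E) := by
    rintro ⟨c, hc, hyc⟩
    exact hcon ⟨c, hc, hyc⟩
  obtain ⟨f, u, hfu, hux⟩ := geometric_hahn_banach_closed_point K.convex hcl hyK
  have h0 : (0:E) ∈ (K : Set E) := ⟨fun _ => 0, fun _ => le_refl 0, by simp⟩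
  have hu : 0 < u := by simpa using hfu 0 h0
  have hfK : ∀ a ∈ (K : Set E), f a ≤ 0 := by
    intro a ha
    by_contra hpos
    push_neg at hpos
    have hmem : (u / f a + 1) • a ∈ (K : Set E) := K.smul_mem (by positivity) ha
    have := hfu _ hmem
    rw [map_smul, smul_eq_mul, add_mul, div_mul_cancel₀ _ hpos.ne'] at this
    linarith
  set d : E := -(InnerProductSpace.toDual ℝ E).symm f
  have hd : ∀ z, ⟪z, d⟫ = -f z := by
    intro z
    rw [inner_neg_right, real_inner_comm, InnerProductSpace.toDual_symm_apply]
  have := h d (fun i => by rw [hd]; linarith [hfK _ (hvK i)])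
  rw [hd] at this
  linarith

theorem exact_penalization_min_norm
    {n m : ℕ} (A : Matrix (Fin m) (Fin n) ℝ) (b : Fin m → ℝ)
    (C : Set (EuclideanSpace ℝ (Fin n)))
    (hCdef : C = {z : EuclideanSpace ℝ (Fin n) | ∀ i, A.mulVec z i ≤ b i})
    (hC : C.Nonempty) (hCcomp : IsCompact C)
    (x : EuclideanSpace ℝ (Fin n))
    (S : Set (EuclideanSpace ℝ (Fin n)))
    (hS : S = {c ∈ C | ∀ c' ∈ C, ⟪c, x⟫ ≤ ⟪c', x⟫})
    (z₀ : EuclideanSpace ℝ (Fin n)) (hz₀S : z₀ ∈ S)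
    (hz₀min : ∀ z ∈ S, ‖z₀‖ ≤ ‖z‖)
    (ν : ℝ) (hν : ν = ⟪z₀, x⟫) :
    ∃ lam : ℝ, 0 ≤ lam ∧
      (∀ z ∈ C, z ≠ z₀ →
        (1 / 2) * ‖z₀‖ ^ 2 + lam * (⟪x, z₀⟫ - ν)
          < (1 / 2) * ‖z‖ ^ 2 + lam * (⟪x, z⟫ - ν)) ∧
      (∀ c ∈ C, ⟪(-(lam • x)) - z₀, c - z₀⟫ ≤ 0) := by
  classical
  set row : Fin m → EuclideanSpace ℝ (Fin n) := fun i => WithLp.toLp 2 (fun j => A i j) with hrowdef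
  have hrow : ∀ (i : Fin m) (z : EuclideanSpace ℝ (Fin n)), A.mulVec z i = ⟪row i, z⟫ := by
    intro i z
    simp [Matrix.mulVec, dotProduct, PiLp.inner_apply, hrowdef, conj_trivial, mul_comm]
  have hz₀C : z₀ ∈ C := (hS ▸ hz₀S).1
  have hz₀opt : ∀ c' ∈ C, ⟪z₀, x⟫ ≤ ⟪c', x⟫ := (hS ▸ hz₀S).2
  have hz₀b : ∀ i, ⟪row i, z₀⟫ ≤ b i := by
    intro i
    rw [← hrow]
    exact (hCdef ▸ hz₀C) i
  set w : Option (Fin m) → EuclideanSpace ℝ (Fin n) := fun o =>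
    Option.rec (-x) (fun i => if ⟪row i, z₀⟫ = b i then -(row i) else 0) o with hwdef
  have hfark : ∀ d : EuclideanSpace ℝ (Fin n), (∀ o, 0 ≤ ⟪w o, d⟫) → 0 ≤ ⟪z₀, d⟫ := by
    intro d hd
    have hdx : ⟪x, d⟫ ≤ 0 := by
      have := hd none
      simp only [hwdef, inner_neg_left] at this
      linarith
    have hdi : ∀ i, ⟪row i, z₀⟫ = b i → ⟪row i, d⟫ ≤ 0 := by
      intro i hact
      have := hd (some i)
      simp only [hwdef, if_pos hact, inner_neg_left] at this
      linarith
    have hmemC : ∀ᶠ t in nhdsWithin (0:ℝ) (Set.Ioi 0), z₀ + t • d ∈ C := by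
      rw [hCdef]
      simp only [Set.mem_setOf_eq]
      rw [Filter.eventually_all]
      intro i
      have hexp : ∀ t : ℝ, A.mulVec (WithLp.ofLp (z₀ + t • d)) i = ⟪row i, z₀⟫ + t * ⟪row i, d⟫ := by
        intro t
        rw [hrow, inner_add_right, real_inner_smul_right]
      by_cases hact : ⟪row i, z₀⟫ = b i
      · filter_upwards [self_mem_nhdsWithin] with t ht
        rw [hexp, hact]
        have ht0 : (0:ℝ) < t := ht
        have : t * ⟪row i, d⟫ ≤ 0 :=
          mul_nonpos_of_nonneg_of_nonpos ht0.le (hdi i hact)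
        linarith
      · have hlt : ⟪row i, z₀⟫ < b i := lt_of_le_of_ne (hz₀b i) hact
        have hcont : Filter.Tendsto (fun t : ℝ => ⟪row i, z₀⟫ + t * ⟪row i, d⟫)
            (nhdsWithin (0:ℝ) (Set.Ioi 0)) (nhds (⟪row i, z₀⟫)) := by
          apply Filter.Tendsto.mono_left _ nhdsWithin_le_nhds
          have hcc : Continuous (fun t : ℝ => ⟪row i, z₀⟫ + t * ⟪row i, d⟫) :=
            continuous_const.add (continuous_id.mul continuous_const)
          simpa using hcc.tendsto 0
        filter_upwards [hcont.eventually_lt_const hlt] with t htt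
        rw [hexp]
        exact htt.le
    have hmemS : ∀ᶠ t in nhdsWithin (0:ℝ) (Set.Ioi 0), z₀ + t • d ∈ S := by
      filter_upwards [hmemC, self_mem_nhdsWithin] with t htC ht
      have ht0 : (0:ℝ) < t := ht
      rw [hS]
      refine ⟨htC, fun c' hc' => ?_⟩
      have hexp : ⟪z₀ + t • d, x⟫ = ⟪z₀, x⟫ + t * ⟪d, x⟫ := by
        rw [inner_add_left, real_inner_smul_left]
      have hdx' : ⟪d, x⟫ ≤ 0 := by rw [real_inner_comm]; exact hdx
      have h1 : ⟪z₀ + t • d, x⟫ ≤ ⟪z₀, x⟫ := by nlinarith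
      exact h1.trans (hz₀opt c' hc')
    have hquad : ∀ᶠ t in nhdsWithin (0:ℝ) (Set.Ioi 0),
        0 ≤ 2 * ⟪z₀, d⟫ + t * ‖d‖ ^ 2 := by
      filter_upwards [hmemS, self_mem_nhdsWithin] with t htS ht
      have ht0 : (0:ℝ) < t := ht
      have hnorm := hz₀min _ htS
      have h2 : ‖z₀ + t • d‖ ^ 2 = ‖z₀‖ ^ 2 + 2 * ⟪z₀, t • d⟫ + ‖t • d‖ ^ 2 :=
        norm_add_sq_real _ _
      have h3 : ⟪z₀, t • d⟫ = t * ⟪z₀, d⟫ := real_inner_smul_right _ _ _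
      have h4 : ‖t • d‖ = t * ‖d‖ := by
        rw [norm_smul, Real.norm_eq_abs, abs_of_pos ht0]
      have h5 : ‖z₀‖ ^ 2 ≤ ‖z₀ + t • d‖ ^ 2 :=
        pow_le_pow_left₀ (norm_nonneg _) hnorm 2
      rw [h3, h4] at h2
      nlinarith
    have hlim : Filter.Tendsto (fun t : ℝ => 2 * ⟪z₀, d⟫ + t * ‖d‖ ^ 2)
        (nhdsWithin (0:ℝ) (Set.Ioi 0)) (nhds (2 * ⟪z₀, d⟫)) := by
      apply Filter.Tendsto.mono_left _ nhdsWithin_le_nhds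
      have hcc : Continuous (fun t : ℝ => 2 * ⟪z₀, d⟫ + t * ‖d‖ ^ 2) :=
        continuous_const.add (continuous_id.mul continuous_const)
      simpa using hcc.tendsto 0
    have := ge_of_tendsto hlim hquad
    linarith
  obtain ⟨c, hc, hzsum⟩ := farkas_cone w z₀ hfark
  set lam := c none with hlam
  have hzsum' : z₀ = c none • (-x) + ∑ i, c (some i) • w (some i) := by
    rw [hzsum, univ_option, Finset.sum_insertNone]
  have hqsum : -(lam • x) - z₀
      = ∑ i, c (some i) • (if ⟪row i, z₀⟫ = b i then row i else 0) := by
    have h2 : ∑ i, c (some i) • (if ⟪row i, z₀⟫ = b i then row i else 0)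
        = -∑ i, c (some i) • w (some i) := by
      rw [← Finset.sum_neg_distrib]
      apply Finset.sum_congr rfl
      intro i _
      have hw : w (some i) = if ⟪row i, z₀⟫ = b i then -(row i) else 0 := rfl
      rw [hw]
      split_ifs with hact
      · rw [smul_neg, neg_neg]
      · rw [smul_zero, neg_zero]
    rw [h2, hzsum', hlam, smul_neg]
    abel
  have hproj : ∀ p ∈ C, ⟪(-(lam • x)) - z₀, p - z₀⟫ ≤ 0 := by
    intro p hp
    rw [hqsum, sum_inner]
    apply Finset.sum_nonpos
    intro i _
    rw [real_inner_smul_left]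
    by_cases hact : ⟪row i, z₀⟫ = b i
    · rw [if_pos hact, inner_sub_right, hact]
      have h1 : ⟪row i, p⟫ ≤ b i := by rw [← hrow]; exact (hCdef ▸ hp) i
      have h2 := hc (some i)
      have h3 : ⟪row i, p⟫ - b i ≤ 0 := by linarith
      exact mul_nonpos_of_nonneg_of_nonpos h2 h3
    · rw [if_neg hact]
      simp
  refine ⟨lam, hc none, ?_, hproj⟩
  intro z hzC hne
  have hperp := hproj z hzC
  have hxz₀ : ⟪x, z₀⟫ = ν := by rw [hν, real_inner_comm]
  have hexpand : ‖z‖ ^ 2 = ‖z₀‖ ^ 2 + 2 * ⟪z₀, z - z₀⟫ + ‖z - z₀‖ ^ 2 := by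
    have h0 := norm_add_sq_real z₀ (z - z₀)
    rw [add_sub_cancel] at h0
    exact h0
  have hlin : ⟪x, z⟫ - ν = ⟪x, z - z₀⟫ := by rw [inner_sub_right, hxz₀]
  have hperp' : ⟪(-(lam • x)) - z₀, z - z₀⟫
      = -(lam * ⟪x, z - z₀⟫) - ⟪z₀, z - z₀⟫ := by
    rw [inner_sub_left, inner_neg_left, real_inner_smul_left]
  have hpos : 0 < ‖z - z₀‖ ^ 2 :=
    pow_pos (norm_pos_iff.mpr (sub_ne_zero.mpr hne)) 2
  rw [hperp'] at hperp
  rw [hxz₀]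
  have hlin2 : lam * (⟪x, z⟫ - ν) = lam * ⟪x, z - z₀⟫ := by rw [hlin]
  linarith
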